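/- Domain of multirelations satisfies locality: for all multirelations R, S over X, d(R · S) = d(R · d(S)). -/
import Mathlib


open Set

/-- Sequential composition of multirelations (Peleg). -/
def mseq {X : Type*} (R S : Set (X × Set X)) : Set (X × Set X) :=
  {p | ∃ B, (p.1, B) ∈ R ∧ ∃ f : X → Set X, (∀ b ∈ B, (b, f b) ∈ S) ∧ p.2 = ⋃ b ∈ B, f b}

/-- The unit of sequential composition. -/
def sunit (X : Type*) : Set (X × Set X) := {p | p.2 = {p.1}}

/-- Parallel (concurrent) composition of multirelations. -/
def mpar {X : Type*} (R S : Set (X × Set X)) : Set (X × Set X) :=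
  {p | ∃ A B, (p.1, A) ∈ R ∧ (p.1, B) ∈ S ∧ p.2 = A ∪ B}

/-- The unit of parallel composition. -/
def punit (X : Type*) : Set (X × Set X) := {p | p.2 = (∅ : Set X)}

/-- Domain of a multirelation. -/
def mdom {X : Type*} (R : Set (X × Set X)) : Set (X × Set X) :=
  {p | p.2 = {p.1} ∧ ∃ A, (p.1, A) ∈ R}

/-- Antidomain of a multirelation. -/
def mantidom {X : Type*} (R : Set (X × Set X)) : Set (X × Set X) :=
  {p | p.2 = {p.1} ∧ ¬ ∃ A, (p.1, A) ∈ R}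

/-- Diamond operator. -/
def mdia {X : Type*} (R P : Set (X × Set X)) : Set (X × Set X) := mdom (mseq R P)

theorem stmt12 {X : Type*} (R S : Set (X × Set X)) :
    mdom (mseq R S) = mdom (mseq R (mdom S)) := by
  classical
  ext p
  simp only [mdom, mseq, Set.mem_setOf_eq]
  constructor
  · rintro ⟨hp, A, B, hB, f, hf, -⟩
    refine ⟨hp, ⋃ b ∈ B, ({b} : Set X), B, hB, fun b => ({b} : Set X),
      fun b hb => ⟨rfl, f b, hf b hb⟩, rfl⟩
  · rintro ⟨hp, A, B, hB, f, hf, -⟩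
    choose g hg using fun b hb => (hf b hb).2
    refine ⟨hp, ⋃ b ∈ B, if h : b ∈ B then g b h else ∅, B, hB,
      fun b => if h : b ∈ B then g b h else ∅, fun b hb => ?_, rfl⟩
    simp only [dif_pos hb]; exact hg b hb
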